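/- Let B be an n×n real symmetric positive definite matrix with simple eigenvalues and let μ_i > μ_{i+1} > 0 be two consecutive eigenvalues with orthonormal eigenvectors x_i, x_{i+1}. Fix κ ∈ (μ_{i+1}, μ_i), γ ∈ (0,1), and let L(κ) = {x ≠ 0 : μ(x) = κ}. Then for every x ∈ L(κ) and every x* ∈ L(κ) ∩ span{x_i, x_{i+1}} one has: (i) ‖Bx* − κx*‖/‖x*‖ ≤ ‖Bx − κx‖/‖x‖, and (ii) φ_1(x*) − φ_γ(x*) ≤ φ_1(x) − φ_γ(x). That is, both the normalized gradient norm ‖∇μ(x)‖·‖x‖ = 2‖Bx − κx‖/‖x‖ and the angle difference φ_1(x) − φ_γ(x) attain their minima over L(κ) at points of span{x_i, x_{i+1}}. -/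

import Mathlib

set_option maxHeartbeats 1000000

noncomputable section

/-- Real matrix-vector multiplication viewed as a map on `EuclideanSpace`. -/
def mulVecEr {n : ℕ} (M : Matrix (Fin n) (Fin n) ℝ) (x : EuclideanSpace ℝ (Fin n)) :
    EuclideanSpace ℝ (Fin n) :=
  (WithLp.equiv 2 (Fin n → ℝ)).symm (M.mulVec (WithLp.equiv 2 (Fin n → ℝ) x))

/-- The Rayleigh quotient `μ(x) = (x,Bx)/(x,x)`. -/
def RQr {n : ℕ} (B : Matrix (Fin n) (Fin n) ℝ) (x : EuclideanSpace ℝ (Fin n)) : ℝ :=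
  (inner ℝ x (mulVecEr B x) : ℝ) / ‖x‖ ^ 2

/-- The opening angle `φ_γ(x) = arcsin(γ ‖Bx - μ(x)x‖ / ‖Bx‖)`. -/
def oangleR {n : ℕ} (B : Matrix (Fin n) (Fin n) ℝ) (γ : ℝ)
    (x : EuclideanSpace ℝ (Fin n)) : ℝ :=
  Real.arcsin (γ * ‖mulVecEr B x - RQr B x • x‖ / ‖mulVecEr B x‖)

lemma mulVecEr_eq_toEuclideanLin {n : ℕ} (B : Matrix (Fin n) (Fin n) ℝ)
    (x : EuclideanSpace ℝ (Fin n)) : mulVecEr B x = Matrix.toEuclideanLin B x := rfl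

lemma mulVecEr_add {n : ℕ} (B : Matrix (Fin n) (Fin n) ℝ) (u v : EuclideanSpace ℝ (Fin n)) :
    mulVecEr B (u + v) = mulVecEr B u + mulVecEr B v := by
  simp [mulVecEr_eq_toEuclideanLin, map_add]

lemma mulVecEr_smul {n : ℕ} (B : Matrix (Fin n) (Fin n) ℝ) (a : ℝ) (u : EuclideanSpace ℝ (Fin n)) :
    mulVecEr B (a • u) = a • mulVecEr B u := by
  simp [mulVecEr_eq_toEuclideanLin, map_smul]

lemma inner_mulVecEr_symm {n : ℕ} {B : Matrix (Fin n) (Fin n) ℝ} (hB : B.IsHermitian)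
    (u v : EuclideanSpace ℝ (Fin n)) :
    (inner ℝ (mulVecEr B u) v : ℝ) = inner ℝ u (mulVecEr B v) := by
  rw [mulVecEr_eq_toEuclideanLin, mulVecEr_eq_toEuclideanLin]
  exact (Matrix.isHermitian_iff_isSymmetric.mp hB) u v

lemma inner_combo {E : Type*} [NormedAddCommGroup E] [InnerProductSpace ℝ E]
    {u v : E} (hu : ‖u‖ = 1) (hv : ‖v‖ = 1) (huv : (inner ℝ u v : ℝ) = 0) (a b c d : ℝ) :
    (inner ℝ (a • u + b • v) (c • u + d • v) : ℝ) = a * c + b * d := by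
  have huu : (inner ℝ u u : ℝ) = 1 := by rw [real_inner_self_eq_norm_sq, hu]; norm_num
  have hvv : (inner ℝ v v : ℝ) = 1 := by rw [real_inner_self_eq_norm_sq, hv]; norm_num
  have hvu : (inner ℝ v u : ℝ) = 0 := by rw [real_inner_comm]; exact huv
  simp [inner_add_add_self, inner_add_left, inner_add_right, real_inner_smul_left,
    real_inner_smul_right, huu, hvv, huv, hvu, hu, hv]
  ring

lemma norm_sq_combo {E : Type*} [NormedAddCommGroup E] [InnerProductSpace ℝ E]
    {u v : E} (hu : ‖u‖ = 1) (hv : ‖v‖ = 1) (huv : (inner ℝ u v : ℝ) = 0) (a b : ℝ) :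
    ‖a • u + b • v‖ ^ 2 = a ^ 2 + b ^ 2 := by
  rw [← real_inner_self_eq_norm_sq, inner_combo hu hv huv]; ring

lemma arcsin_sub_arcsin_mul_mono {γ ρ : ℝ} (hγ0 : 0 < γ) (hγ1 : γ < 1) (hρ1 : ρ < 1) :
    MonotoneOn (fun t => Real.arcsin t - Real.arcsin (γ * t)) (Set.Icc 0 ρ) := by
  apply monotoneOn_of_deriv_nonneg (convex_Icc 0 ρ)
  · exact (Real.continuous_arcsin.sub
      (Real.continuous_arcsin.comp (continuous_const.mul continuous_id))).continuousOn
  · intro t ht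
    rw [interior_Icc] at ht
    have h1 : 0 < t := ht.1
    have h2 : t < 1 := lt_of_lt_of_le ht.2 (le_of_lt hρ1)
    have hd1 : HasDerivAt Real.arcsin (1 / Real.sqrt (1 - t ^ 2)) t :=
      Real.hasDerivAt_arcsin (by linarith) (by linarith)
    have hγt1 : γ * t < 1 := by nlinarith
    have hγt0 : 0 < γ * t := by positivity
    have hd2 : HasDerivAt (fun s => Real.arcsin (γ * s))
        ((1 / Real.sqrt (1 - (γ * t) ^ 2)) * γ) t := by
      have := (Real.hasDerivAt_arcsin (x := γ * t) (by linarith) (by linarith)).comp t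
        ((hasDerivAt_id t).const_mul γ)
      simpa [Function.comp_def] using this
    exact ((hd1.sub hd2).differentiableAt).differentiableWithinAt
  · intro t ht
    rw [interior_Icc] at ht
    have h1 : 0 < t := ht.1
    have h2 : t < 1 := lt_of_lt_of_le ht.2 (le_of_lt hρ1)
    have hd1 : HasDerivAt Real.arcsin (1 / Real.sqrt (1 - t ^ 2)) t :=
      Real.hasDerivAt_arcsin (by linarith) (by linarith)
    have hγt1 : γ * t < 1 := by nlinarith
    have hγt0 : 0 < γ * t := by positivity
    have hd2 : HasDerivAt (fun s => Real.arcsin (γ * s))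
        ((1 / Real.sqrt (1 - (γ * t) ^ 2)) * γ) t := by
      have := (Real.hasDerivAt_arcsin (x := γ * t) (by linarith) (by linarith)).comp t
        ((hasDerivAt_id t).const_mul γ)
      simpa [Function.comp_def] using this
    rw [HasDerivAt.deriv (f := fun t => Real.arcsin t - Real.arcsin (γ * t)) (hd1.sub hd2)]
    have ha : 0 < Real.sqrt (1 - t ^ 2) := Real.sqrt_pos.mpr (by nlinarith)
    have hbpos : 0 < Real.sqrt (1 - (γ * t) ^ 2) := Real.sqrt_pos.mpr (by nlinarith)
    have hab : Real.sqrt (1 - t ^ 2) ≤ Real.sqrt (1 - (γ * t) ^ 2) := by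
      apply Real.sqrt_le_sqrt
      nlinarith [mul_nonneg (sq_nonneg t)
        (mul_nonneg (by linarith : (0:ℝ) ≤ 1 - γ) (by linarith : (0:ℝ) ≤ 1 + γ))]
    rw [sub_nonneg, div_mul_eq_mul_div, one_mul, div_le_div_iff₀ hbpos ha]
    nlinarith

/-- General lower bound on the residual over the level set. -/
lemma key_lower {n : ℕ} {B : Matrix (Fin n) (Fin n) ℝ} (hB : B.IsHermitian)
    (μs : Fin n → ℝ) (xs : Fin n → EuclideanSpace ℝ (Fin n)) (hon : Orthonormal ℝ xs)
    (heig : ∀ k, mulVecEr B (xs k) = μs k • xs k)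
    (i j : Fin n) (hij : ∀ k, 0 ≤ (μs k - μs i) * (μs k - μs j))
    (κ : ℝ) (y : EuclideanSpace ℝ (Fin n)) (hy : y ≠ 0) (hRQ : RQr B y = κ) :
    (μs i - κ) * (κ - μs j) * ‖y‖ ^ 2 ≤ ‖mulVecEr B y - κ • y‖ ^ 2 := by
  have hne : Nonempty (Fin n) := ⟨i⟩
  set D := (μs i - κ) * (κ - μs j) with hD
  set E := μs i + μs j - 2 * κ with hE
  clear_value D E
  -- orthonormal basis
  have hcard : Fintype.card (Fin n) = Module.finrank ℝ (EuclideanSpace ℝ (Fin n)) := by simp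
  let bb := basisOfLinearIndependentOfCardEqFinrank hon.linearIndependent hcard
  have hbb : ⇑bb = xs := coe_basisOfLinearIndependentOfCardEqFinrank _ _
  let b : OrthonormalBasis (Fin n) ℝ (EuclideanSpace ℝ (Fin n)) :=
    bb.toOrthonormalBasis (by rw [hbb]; exact hon)
  have hb : ∀ k, b k = xs k := fun k => by
    have : ⇑b = ⇑bb := Module.Basis.coe_toOrthonormalBasis bb _
    rw [this, hbb]
  set c : Fin n → ℝ := fun k => inner ℝ (xs k) y with hc
  have hinner : ∀ u w : EuclideanSpace ℝ (Fin n),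
      (inner ℝ u w : ℝ) = ∑ k, (inner ℝ (xs k) u : ℝ) * inner ℝ (xs k) w := by
    intro u w
    rw [← b.sum_inner_mul_inner u w]
    refine Finset.sum_congr rfl fun k _ => ?_
    rw [hb, real_inner_comm u (xs k)]
  have hcB : ∀ k, (inner ℝ (xs k) (mulVecEr B y) : ℝ) = μs k * c k := by
    intro k
    rw [← inner_mulVecEr_symm hB, heig k, real_inner_smul_left]
  have hcz : ∀ k, (inner ℝ (xs k) (mulVecEr B y - κ • y) : ℝ) = (μs k - κ) * c k := by
    intro k
    rw [inner_sub_right, real_inner_smul_right, hcB]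
    simp [hc]; ring
  have hN : ‖y‖ ^ 2 = ∑ k, c k ^ 2 := by
    rw [← real_inner_self_eq_norm_sq, hinner]
    exact Finset.sum_congr rfl fun k _ => by rw [sq]
  have hP : (inner ℝ y (mulVecEr B y) : ℝ) = ∑ k, μs k * c k ^ 2 := by
    rw [hinner]
    refine Finset.sum_congr rfl fun k _ => ?_
    rw [hcB]; simp [hc]; ring
  have hZ : ‖mulVecEr B y - κ • y‖ ^ 2 = ∑ k, (μs k - κ) ^ 2 * c k ^ 2 := by
    rw [← real_inner_self_eq_norm_sq, hinner]
    refine Finset.sum_congr rfl fun k _ => ?_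
    rw [hcz]; ring
  have hyn : ‖y‖ ≠ 0 := norm_ne_zero_iff.mpr hy
  have hP' : ∑ k, μs k * c k ^ 2 = κ * ∑ k, c k ^ 2 := by
    have h1 : (inner ℝ y (mulVecEr B y) : ℝ) = κ * ‖y‖ ^ 2 := by
      rw [RQr, div_eq_iff (pow_ne_zero 2 hyn)] at hRQ
      exact hRQ
    rw [← hP, h1, hN]
  have h0 : ∑ k, (μs k - κ) * c k ^ 2 = 0 := by
    have : ∑ k, (μs k - κ) * c k ^ 2 = (∑ k, μs k * c k ^ 2) - κ * ∑ k, c k ^ 2 := by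
      rw [Finset.mul_sum, ← Finset.sum_sub_distrib]
      exact Finset.sum_congr rfl fun k _ => by ring
    rw [this, hP', sub_self]
  have h1 : ∑ k, (D + E * (μs k - κ)) * c k ^ 2 = D * ∑ k, c k ^ 2 := by
    have : ∑ k, (D + E * (μs k - κ)) * c k ^ 2
        = D * (∑ k, c k ^ 2) + E * ∑ k, (μs k - κ) * c k ^ 2 := by
      rw [Finset.mul_sum, Finset.mul_sum, ← Finset.sum_add_distrib]
      exact Finset.sum_congr rfl fun k _ => by ring
    rw [this, h0]; ring
  have hsum : ∑ k, (D + E * (μs k - κ)) * c k ^ 2 ≤ ∑ k, (μs k - κ) ^ 2 * c k ^ 2 := by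
    refine Finset.sum_le_sum fun k _ => ?_
    have h2 := hij k
    have h3 : (0:ℝ) ≤ c k ^ 2 := sq_nonneg _
    rw [hD, hE]
    nlinarith [mul_nonneg h2 h3]
  rw [hZ, hN]
  calc D * ∑ k, c k ^ 2 = ∑ k, (D + E * (μs k - κ)) * c k ^ 2 := h1.symm
    _ ≤ _ := hsum

/-- Equality on the invariant plane. -/
lemma key_span {n : ℕ} {B : Matrix (Fin n) (Fin n) ℝ}
    (μs : Fin n → ℝ) (xs : Fin n → EuclideanSpace ℝ (Fin n)) (hon : Orthonormal ℝ xs)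
    (heig : ∀ k, mulVecEr B (xs k) = μs k • xs k)
    (i j : Fin n) (hij : i ≠ j)
    (κ : ℝ) (y : EuclideanSpace ℝ (Fin n)) (hy : y ≠ 0) (hRQ : RQr B y = κ)
    (hmem : y ∈ Submodule.span ℝ {xs i, xs j}) :
    ‖mulVecEr B y - κ • y‖ ^ 2 = (μs i - κ) * (κ - μs j) * ‖y‖ ^ 2 := by
  obtain ⟨a, b, hab⟩ := Submodule.mem_span_pair.mp hmem
  have hu : ‖xs i‖ = 1 := hon.1 i
  have hv : ‖xs j‖ = 1 := hon.1 j
  have huv : (inner ℝ (xs i) (xs j) : ℝ) = 0 := hon.2 hij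
  have hBy : mulVecEr B y = (a * μs i) • xs i + (b * μs j) • xs j := by
    rw [← hab, mulVecEr_add, mulVecEr_smul, mulVecEr_smul, heig, heig, smul_smul, smul_smul]
  have hres : mulVecEr B y - κ • y = (a * (μs i - κ)) • xs i + (b * (μs j - κ)) • xs j := by
    rw [hBy, ← hab]
    module
  have hNy : ‖y‖ ^ 2 = a ^ 2 + b ^ 2 := by
    rw [← hab, norm_sq_combo hu hv huv]
  have hyn : ‖y‖ ≠ 0 := norm_ne_zero_iff.mpr hy
  have hPy : (inner ℝ y (mulVecEr B y) : ℝ) = a ^ 2 * μs i + b ^ 2 * μs j := by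
    rw [hBy, ← hab, inner_combo hu hv huv]; ring
  have hconstraint : a ^ 2 * μs i + b ^ 2 * μs j = κ * (a ^ 2 + b ^ 2) := by
    have h1 : (inner ℝ y (mulVecEr B y) : ℝ) = κ * ‖y‖ ^ 2 := by
      rw [RQr, div_eq_iff (pow_ne_zero 2 hyn)] at hRQ
      exact hRQ
    rw [hPy, hNy] at h1
    exact h1
  rw [hres, norm_sq_combo hu hv huv, hNy]
  linear_combination (μs i + μs j - 2 * κ) * hconstraint

/-- On the level set `L(κ) = {x ≠ 0 : μ(x) = κ}` with `κ ∈ (μ_{i+1}, μ_i)`, both the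
normalized residual `‖Bx - κx‖/‖x‖` (proportional to `‖∇μ(x)‖‖x‖`) and the angle
difference `φ_1(x) - φ_γ(x)` attain their minima at points of `span{x_i, x_{i+1}}`. -/
theorem residual_and_angle_minimized_on_invariant_plane
    {n : ℕ} (B : Matrix (Fin n) (Fin n) ℝ) (hB : B.PosDef)
    (μs : Fin n → ℝ) (hdec : StrictAnti μs) (hpos : ∀ k, 0 < μs k)
    (xs : Fin n → EuclideanSpace ℝ (Fin n)) (hon : Orthonormal ℝ xs)
    (heig : ∀ k, mulVecEr B (xs k) = μs k • xs k)
    (i : Fin n) (hi : (i : ℕ) + 1 < n)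
    (κ γ : ℝ) (hκ : κ ∈ Set.Ioo (μs ⟨(i : ℕ) + 1, hi⟩) (μs i))
    (hγ0 : 0 < γ) (hγ1 : γ < 1) :
    ∀ x xstar : EuclideanSpace ℝ (Fin n),
      x ≠ 0 → RQr B x = κ →
      xstar ≠ 0 → RQr B xstar = κ →
      xstar ∈ Submodule.span ℝ {xs i, xs ⟨(i : ℕ) + 1, hi⟩} →
      ‖mulVecEr B xstar - κ • xstar‖ / ‖xstar‖ ≤ ‖mulVecEr B x - κ • x‖ / ‖x‖ ∧
      oangleR B 1 xstar - oangleR B γ xstar ≤ oangleR B 1 x - oangleR B γ x := by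
  intro x xstar hx hRx hxs hRxs hmem
  set j : Fin n := ⟨(i : ℕ) + 1, hi⟩ with hj
  have hijne : i ≠ j := by
    intro h
    have : (i : ℕ) = (i : ℕ) + 1 := congrArg Fin.val h
    omega
  have hκ1 : μs j < κ := hκ.1
  have hκ2 : κ < μs i := hκ.2
  have hκpos : 0 < κ := lt_trans (hpos j) hκ1
  set D := (μs i - κ) * (κ - μs j) with hD
  have hDpos : 0 < D := mul_pos (by linarith) (by linarith)
  have hij : ∀ k, 0 ≤ (μs k - μs i) * (μs k - μs j) := by
    intro k
    rcases le_or_gt (k : ℕ) (i : ℕ) with h | h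
    · have h1 : μs i ≤ μs k := hdec.antitone (by exact h)
      have h2 : μs j < μs i := lt_trans hκ1 hκ2
      nlinarith
    · have h1 : μs k ≤ μs j := hdec.antitone (by
        show j ≤ k
        exact h)
      nlinarith
  -- Part (i)
  have hNx : (0:ℝ) < ‖x‖ := norm_pos_iff.mpr hx
  have hNxs : (0:ℝ) < ‖xstar‖ := norm_pos_iff.mpr hxs
  set R : ℝ := ‖mulVecEr B x - κ • x‖ with hR
  set Rs : ℝ := ‖mulVecEr B xstar - κ • xstar‖ with hRs
  have hR0 : 0 ≤ R := norm_nonneg _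
  have hRs0 : 0 ≤ Rs := norm_nonneg _
  clear_value R Rs
  have hlow : D * ‖x‖ ^ 2 ≤ R ^ 2 := by
    rw [hR, hD]; exact key_lower hB.isHermitian μs xs hon heig i j hij κ x hx hRx
  have hspan : Rs ^ 2 = D * ‖xstar‖ ^ 2 := by
    rw [hRs, hD]; exact key_span μs xs hon heig i j hijne κ xstar hxs hRxs hmem
  have hsq : (Rs / ‖xstar‖) ^ 2 ≤ (R / ‖x‖) ^ 2 := by
    rw [div_pow, div_pow, hspan]
    rw [div_le_div_iff₀ (by positivity) (by positivity)]
    nlinarith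
  have part1 : Rs / ‖xstar‖ ≤ R / ‖x‖ :=
    le_of_pow_le_pow_left₀ two_ne_zero (by positivity) hsq
  refine ⟨part1, ?_⟩
  -- Part (ii)
  -- Pythagoras : ‖Bx‖² = R² + κ²‖x‖²
  have pyth : ∀ z : EuclideanSpace ℝ (Fin n), z ≠ 0 → RQr B z = κ →
      ‖mulVecEr B z‖ ^ 2 = ‖mulVecEr B z - κ • z‖ ^ 2 + κ ^ 2 * ‖z‖ ^ 2 := by
    intro z hz hRz
    have hzn : ‖z‖ ≠ 0 := norm_ne_zero_iff.mpr hz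
    have h1 : (inner ℝ z (mulVecEr B z) : ℝ) = κ * ‖z‖ ^ 2 := by
      rw [RQr, div_eq_iff (pow_ne_zero 2 hzn)] at hRz
      exact hRz
    have horth : (inner ℝ (mulVecEr B z - κ • z) (κ • z) : ℝ) = 0 := by
      rw [inner_sub_left, real_inner_smul_right, real_inner_smul_right, real_inner_smul_left,
        real_inner_self_eq_norm_sq, real_inner_comm, h1]
      ring
    have h2 := norm_add_sq_real (mulVecEr B z - κ • z) (κ • z)
    rw [horth] at h2
    have h3 : mulVecEr B z - κ • z + κ • z = mulVecEr B z := by abel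
    rw [h3] at h2
    rw [h2, norm_smul]
    simp only [mul_zero, add_zero, mul_pow, sq_abs, Real.norm_eq_abs]
  have hMx : ‖mulVecEr B x‖ ^ 2 = R ^ 2 + κ ^ 2 * ‖x‖ ^ 2 := by
    rw [hR]; exact pyth x hx hRx
  have hMxs : ‖mulVecEr B xstar‖ ^ 2 = Rs ^ 2 + κ ^ 2 * ‖xstar‖ ^ 2 := by
    rw [hRs]; exact pyth xstar hxs hRxs
  set M : ℝ := ‖mulVecEr B x‖ with hM
  set Ms : ℝ := ‖mulVecEr B xstar‖ with hMs
  have hM0 : 0 ≤ M := norm_nonneg _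
  have hMs0 : 0 ≤ Ms := norm_nonneg _
  clear_value M Ms
  have hMpos : 0 < M := by
    nlinarith [hMx, sq_nonneg R, mul_pos (mul_pos hκpos hκpos) (mul_pos hNx hNx)]
  have hMspos : 0 < Ms := by
    nlinarith [hMxs, sq_nonneg Rs, mul_pos (mul_pos hκpos hκpos) (mul_pos hNxs hNxs)]
  set ρ : ℝ := R / M with hρ
  set ρs : ℝ := Rs / Ms with hρs
  have hρ0 : 0 ≤ ρ := by positivity
  have hρs0 : 0 ≤ ρs := by positivity
  clear_value j D
  have hρlt1 : ρ < 1 := by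
    rw [hρ, div_lt_one hMpos]
    have hpos2 : 0 < κ ^ 2 * ‖x‖ ^ 2 := by positivity
    have : R ^ 2 < M ^ 2 := by rw [hMx]; linarith
    nlinarith
  have hρsle : ρs ≤ ρ := by
    have hcross : Rs * ‖x‖ ≤ R * ‖xstar‖ := by
      rw [div_le_div_iff₀ hNxs hNx] at part1
      exact part1
    have hsq2 : ρs ^ 2 ≤ ρ ^ 2 := by
      rw [hρ, hρs, div_pow, div_pow, div_le_div_iff₀ (by positivity) (by positivity), hMx, hMxs]
      have h2 : (Rs * ‖x‖) ^ 2 ≤ (R * ‖xstar‖) ^ 2 :=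
        pow_le_pow_left₀ (by positivity) hcross 2
      nlinarith
    exact le_of_pow_le_pow_left₀ two_ne_zero hρ0 hsq2
  have hmono : MonotoneOn (fun t => Real.arcsin t - Real.arcsin (γ * t)) (Set.Icc 0 ρ) :=
    arcsin_sub_arcsin_mul_mono hγ0 hγ1 hρlt1
  have key := hmono (Set.mem_Icc.mpr ⟨hρs0, hρsle⟩) (Set.mem_Icc.mpr ⟨hρ0, le_refl ρ⟩) hρsle
  simp only [oangleR, hRx, hRxs]
  rw [← hR, ← hRs, ← hM, ← hMs]
  have e1 : (1:ℝ) * R / M = ρ := by rw [one_mul]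
  have e2 : (1:ℝ) * Rs / Ms = ρs := by rw [one_mul]
  have e3 : γ * R / M = γ * ρ := by rw [hρ]; ring
  have e4 : γ * Rs / Ms = γ * ρs := by rw [hρs]; ring
  rw [e1, e2, e3, e4]
  exact key
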